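/- For any polynomials P, Q ∈ ℂ[X], the map φ : ℂ → ℂ² defined by φ(t) = (t + P(e^{Q(t)}), e^{Q(t)}) is proper: for every R > 0 there is a compact set C ⊆ ℂ such that for every t ∉ C, the norm of φ(t) exceeds R. Equivalently, the preimage under φ of every compact subset of ℂ² is compact. -/

import Mathlib

/-- Key step: for every `R > 0` there is a compact `C` outside of which the sup norm of
`φ t = (t + P(e^{Q t}), e^{Q t})` exceeds `R`. -/
theorem stmt5_aux (P Q : Polynomial ℂ) (φ : ℂ → ℂ × ℂ)
    (hφ : ∀ t, φ t = (t + P.eval (Complex.exp (Q.eval t)), Complex.exp (Q.eval t))) :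
    ∀ R : ℝ, 0 < R → ∃ C : Set ℂ, IsCompact C ∧
        ∀ t ∉ C, R < max ‖(φ t).1‖ ‖(φ t).2‖ := by
  intro R hR
  obtain ⟨B, hB⟩ := (isCompact_closedBall (0 : ℂ) R).exists_bound_of_continuousOn
    (Polynomial.continuous P).continuousOn
  refine ⟨Metric.closedBall 0 (R + max B 0), isCompact_closedBall _ _, ?_⟩
  intro t ht
  rw [Metric.mem_closedBall, not_le, dist_zero_right] at ht
  rw [hφ]
  simp only
  by_cases h2 : R < ‖Complex.exp (Q.eval t)‖
  · exact lt_max_of_lt_right h2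
  · push_neg at h2
    have hPB : ‖P.eval (Complex.exp (Q.eval t))‖ ≤ B := by
      apply hB
      rw [Metric.mem_closedBall, dist_zero_right]
      exact h2
    refine lt_max_of_lt_left ?_
    have key : ‖t‖ - ‖P.eval (Complex.exp (Q.eval t))‖ ≤ ‖t + P.eval (Complex.exp (Q.eval t))‖ := by
      have := norm_sub_norm_le t (-(P.eval (Complex.exp (Q.eval t))))
      simpa [sub_neg_eq_add] using this
    have hB0 : B ≤ max B 0 := le_max_left _ _
    have : R < ‖t‖ - ‖P.eval (Complex.exp (Q.eval t))‖ := by linarith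
    calc R < ‖t‖ - ‖P.eval (Complex.exp (Q.eval t))‖ := this
      _ ≤ ‖t + P.eval (Complex.exp (Q.eval t))‖ := key

/-- The map `φ(t) = (t + P(e^{Q(t)}), e^{Q(t)})` is proper: outside suitable compact sets
its sup norm exceeds any given bound, equivalently preimages of compacts are compact. -/
theorem stmt5 (P Q : Polynomial ℂ) (φ : ℂ → ℂ × ℂ)
    (hφ : ∀ t, φ t = (t + P.eval (Complex.exp (Q.eval t)), Complex.exp (Q.eval t))) :
    (∀ R : ℝ, 0 < R → ∃ C : Set ℂ, IsCompact C ∧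
        ∀ t ∉ C, R < max ‖(φ t).1‖ ‖(φ t).2‖) ∧
      ∀ K : Set (ℂ × ℂ), IsCompact K → IsCompact (φ ⁻¹' K) := by
  have hmain := stmt5_aux P Q φ hφ
  refine ⟨hmain, ?_⟩
  intro K hK
  have hcont : Continuous φ := by
    have : φ = fun t => (t + P.eval (Complex.exp (Q.eval t)), Complex.exp (Q.eval t)) :=
      funext hφ
    rw [this]
    fun_prop
  obtain ⟨R, hR⟩ := hK.isBounded.subset_ball_lt 0 0
  obtain ⟨C, hCcomp, hC⟩ := hmain R hR.1
  apply hCcomp.of_isClosed_subset (hK.isClosed.preimage hcont)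
  intro t ht
  by_contra htC
  have h1 := hC t htC
  have h2 := hR.2 ht
  rw [Metric.mem_ball, dist_zero_right, Prod.norm_def] at h2
  have : max ‖(φ t).1‖ ‖(φ t).2‖ < R := h2
  have e1 : ‖(φ t).1‖ = ‖(φ t).1‖ := rfl
  have e2 : ‖(φ t).2‖ = ‖(φ t).2‖ := rfl
  rw [e1, e2] at h1
  linarith
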